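/- On the symbolic lattice L, the order ⊑ is characterized by the join: for all l₁, l₂ ∈ L, l₁ ⊑ l₂ if and only if l₁ ⊔ l₂ = l₂. -/
import Mathlib


inductive SymExpr (P U B F : Type*) where
  | bot : SymExpr P U B F
  | top : SymExpr P U B F
  | prim : P → SymExpr P U B F
  | unop : U → SymExpr P U B F → SymExpr P U B F
  | binop : B → SymExpr P U B F → SymExpr P U B F → SymExpr P U B F
  | fn : F → List (SymExpr P U B F) → SymExpr P U B F
  | phi : List (SymExpr P U B F) → SymExpr P U B F

namespace SymExpr

variable {P U B F : Type*}

/-- The partial order `⊑` on the symbolic lattice. -/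
inductive Le : SymExpr P U B F → SymExpr P U B F → Prop where
  | bot (l) : Le .bot l
  | top (l) : Le l .top
  | prim (p : P) : Le (.prim p) (.prim p)
  | unop {l l'} (u : U) : Le l l' → Le (.unop u l) (.unop u l')
  | binop {l₁ l₂ l₁' l₂'} (b : B) : Le l₁ l₁' → Le l₂ l₂' →
      Le (.binop b l₁ l₂) (.binop b l₁' l₂')
  | fn {ls ls'} (f : F) : List.Forall₂ Le ls ls' → Le (.fn f ls) (.fn f ls')
  | phi {ls ls'} : List.Forall₂ Le ls ls' → Le (.phi ls) (.phi ls')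

attribute [local instance] Classical.propDecidable

mutual
noncomputable def join : SymExpr P U B F → SymExpr P U B F → SymExpr P U B F
  | .bot, l => l
  | l, .bot => l
  | .prim p, .prim p' => if p = p' then .prim p else .top
  | .unop u l, .unop u' l' => if u = u' then .unop u (join l l') else .top
  | .binop b l₁ l₂, .binop b' l₁' l₂' =>
      if b = b' then .binop b (join l₁ l₁') (join l₂ l₂') else .top
  | .fn f ls, .fn f' ls' =>
      if f = f' ∧ ls.length = ls'.length then .fn f (joinList ls ls') else .top
  | .phi ls, .phi ls' =>
      if ls.length = ls'.length then .phi (joinList ls ls') else .top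
  | _, _ => .top

noncomputable def joinList : List (SymExpr P U B F) → List (SymExpr P U B F) → List (SymExpr P U B F)
  | l :: ls, l' :: ls' => join l l' :: joinList ls ls'
  | _, _ => []
end

mutual
noncomputable def meet : SymExpr P U B F → SymExpr P U B F → SymExpr P U B F
  | .top, l => l
  | l, .top => l
  | .prim p, .prim p' => if p = p' then .prim p else .bot
  | .unop u l, .unop u' l' => if u = u' then .unop u (meet l l') else .bot
  | .binop b l₁ l₂, .binop b' l₁' l₂' =>
      if b = b' then .binop b (meet l₁ l₁') (meet l₂ l₂') else .bot
  | .fn f ls, .fn f' ls' =>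
      if f = f' ∧ ls.length = ls'.length then .fn f (meetList ls ls') else .bot
  | .phi ls, .phi ls' =>
      if ls.length = ls'.length then .phi (meetList ls ls') else .bot
  | _, _ => .bot

noncomputable def meetList : List (SymExpr P U B F) → List (SymExpr P U B F) → List (SymExpr P U B F)
  | l :: ls, l' :: ls' => meet l l' :: meetList ls ls'
  | _, _ => []
end

mutual
def depth : SymExpr P U B F → ℕ
  | .bot => 0
  | .top => 0
  | .prim _ => 0
  | .unop _ l => 1 + depth l
  | .binop _ l₁ l₂ => 1 + max (depth l₁) (depth l₂)
  | .fn _ ls => 1 + depthList ls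
  | .phi ls => 1 + depthList ls

def depthList : List (SymExpr P U B F) → ℕ
  | [] => 0
  | l :: ls => max (depth l) (depthList ls)
end

/-- The widening truncation `T_i`. -/
def trunc : ℕ → SymExpr P U B F → SymExpr P U B F
  | _, .bot => .bot
  | _, .top => .top
  | _, .prim p => .prim p
  | 0, .unop _ _ => .top
  | 0, .binop _ _ _ => .top
  | 0, .fn _ _ => .top
  | 0, .phi _ => .top
  | i + 1, .unop u l => .unop u (trunc i l)
  | i + 1, .binop b l₁ l₂ => .binop b (trunc i l₁) (trunc i l₂)
  | i + 1, .fn f ls => .fn f (ls.map (fun l => trunc i l))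
  | i + 1, .phi ls => .phi (ls.map (fun l => trunc i l))

end SymExpr

namespace SymExpr

variable {P U B F : Type*}

attribute [local instance] Classical.propDecidable

theorem join_top : ∀ (l : SymExpr P U B F), join l .top = .top := by
  intro l; cases l <;> simp [join]

mutual
theorem join_eq_of_le : ∀ {l₁ l₂ : SymExpr P U B F}, Le l₁ l₂ → join l₁ l₂ = l₂
  | _, _, .bot l => by simp [join]
  | _, _, .top l => join_top l
  | _, _, .prim p => by simp [join]
  | _, _, .unop u h => by simp [join, join_eq_of_le h]
  | _, _, .binop b h₁ h₂ => by simp [join, join_eq_of_le h₁, join_eq_of_le h₂]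
  | _, _, .fn f hs => by simp [join, hs.length_eq, joinList_eq_of_forall₂ hs]
  | _, _, .phi hs => by simp [join, hs.length_eq, joinList_eq_of_forall₂ hs]

theorem joinList_eq_of_forall₂ :
    ∀ {ls ls' : List (SymExpr P U B F)}, List.Forall₂ Le ls ls' → joinList ls ls' = ls'
  | _, _, .nil => rfl
  | _, _, .cons h hs => by simp [joinList, join_eq_of_le h, joinList_eq_of_forall₂ hs]
end

mutual
theorem le_of_join_eq : ∀ (l₁ l₂ : SymExpr P U B F), join l₁ l₂ = l₂ → Le l₁ l₂
  | .bot, l, _ => .bot l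
  | l, .top, _ => .top l
  | .top, l₂, h => by
      cases l₂ <;> simp [join] at h <;> exact .top _
  | .prim p, l₂, h => by
      cases l₂ <;> simp [join] at h
      case top => exact .top _
      split at h
      · subst_vars; exact .prim _
      · simp at h
  | .unop u l, l₂, h => by
      cases l₂ <;> simp [join] at h
      case top => exact .top _
      split at h
      · rename_i hc; subst hc
        injection h with h1 h2
        exact .unop _ (le_of_join_eq _ _ h2)
      · simp at h
  | .binop b la lb, l₂, h => by
      cases l₂ <;> simp [join] at h
      case top => exact .top _
      split at h
      · rename_i hc; subst hc
        injection h with h1 h2 h3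
        exact .binop _ (le_of_join_eq _ _ h2) (le_of_join_eq _ _ h3)
      · simp at h
  | .fn f ls, l₂, h => by
      cases l₂ <;> simp [join] at h
      case top => exact .top _
      split at h
      · rename_i hc
        obtain ⟨rfl, hlen⟩ := hc
        injection h with h1 h2
        exact .fn _ (forall₂_of_joinList _ _ hlen h2)
      · simp at h
  | .phi ls, l₂, h => by
      cases l₂ <;> simp [join] at h
      case top => exact .top _
      split at h
      · rename_i hlen
        injection h with h2
        exact .phi (forall₂_of_joinList _ _ hlen h2)
      · simp at h

theorem forall₂_of_joinList :
    ∀ (ls ls' : List (SymExpr P U B F)), ls.length = ls'.length →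
      joinList ls ls' = ls' → List.Forall₂ Le ls ls'
  | [], [], _, _ => .nil
  | [], _ :: _, hlen, _ => by simp at hlen
  | _ :: _, [], hlen, _ => by simp at hlen
  | a :: ls, b :: ls', hlen, h => by
      simp [joinList] at h
      exact .cons (le_of_join_eq _ _ h.1) (forall₂_of_joinList _ _ (by simpa using hlen) h.2)
end

end SymExpr

/-- the order is characterized by the join: `l₁ ⊑ l₂ ↔ l₁ ⊔ l₂ = l₂`. -/
theorem SymExpr.le_iff_join_eq {P U B F : Type*} (l₁ l₂ : SymExpr P U B F) :
    l₁.Le l₂ ↔ l₁.join l₂ = l₂ :=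
  ⟨join_eq_of_le, le_of_join_eq l₁ l₂⟩
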